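/- Let G be a core input-output network with super-simple nodes ι = ρ_1 > ρ_2 > ... > ρ_{q+1} = o in downstream order. Then every ιo-simple path S of G decomposes uniquely as a concatenation S = S_1 · S_2 ⋯ S_q, where each S_i is a simple path from ρ_i to ρ_{i+1} all of whose interior nodes are simple nodes lying between ρ_i and ρ_{i+1} (i.e., interior nodes of S_i belong to the super-simple subnetwork L(ρ_i, ρ_{i+1}) and are not super-simple). -/

import Mathlib

/-- A directed simple path from `a` to `b`. -/
def IsSimplePath {V : Type*} (Adj : V → V → Prop) (a b : V) (l : List V) : Prop :=
  l.Chain' Adj ∧ l.head? = some a ∧ l.getLast? = some b ∧ l.Nodup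

section Helpers

variable {α : Type*}

/-- If two lists split as `t ++ r` with all of `t` failing `P` and the head of `r`
(if any) satisfying `P`, the splitting is unique. -/
lemma splitP_unique {P : α → Prop} :
    ∀ (t t' r r' : List α), (∀ v ∈ t, ¬ P v) → (∀ v ∈ t', ¬ P v) →
      (∀ a ∈ r.head?, P a) → (∀ a ∈ r'.head?, P a) → t ++ r = t' ++ r' → t = t' ∧ r = r'
  | [], [], r, r', _, _, _, _, h => ⟨rfl, h⟩
  | [], b :: t', r, r', _, ht', hr, _, h =>
      absurd (hr b (by rw [List.nil_append] at h; rw [h]; rfl)) (ht' b (by simp))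
  | b :: t, [], r, r', ht, _, _, hr', h =>
      absurd (hr' b (by rw [List.nil_append] at h; rw [← h]; rfl)) (ht b (by simp))
  | a :: t, a' :: t', r, r', ht, ht', hr, hr', h => by
      rw [List.cons_append, List.cons_append] at h
      injection h with h1 h2
      obtain ⟨e1, e2⟩ := splitP_unique t t' r r' (fun v hv => ht v (.tail _ hv))
        (fun v hv => ht' v (.tail _ hv)) hr hr' h2
      exact ⟨by rw [h1, e1], e2⟩

lemma flatten_head_P {P : α → Prop} :
    ∀ (Bs : List (List α)), (∀ b ∈ Bs, ∃ a t, b = a :: t ∧ P a ∧ ∀ v ∈ t, ¬ P v) →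
      ∀ x ∈ Bs.flatten.head?, P x
  | [], _, x, hx => by simp at hx
  | b :: Bs, h, x, hx => by
      obtain ⟨a, t, rfl, hPa, -⟩ := h b (by simp)
      rw [List.flatten_cons, List.cons_append] at hx
      simp only [List.head?_cons, Option.mem_def, Option.some.injEq] at hx
      exact hx ▸ hPa

/-- A flatten of "blocks" (nonempty lists whose head satisfies `P` and whose other
elements don't) determines the blocks. -/
lemma blocks_unique {P : α → Prop} :
    ∀ (Bs Cs : List (List α)), Bs.length = Cs.length →
      (∀ b ∈ Bs, ∃ a t, b = a :: t ∧ P a ∧ ∀ v ∈ t, ¬ P v) →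
      (∀ b ∈ Cs, ∃ a t, b = a :: t ∧ P a ∧ ∀ v ∈ t, ¬ P v) →
      Bs.flatten = Cs.flatten → Bs = Cs
  | [], [], _, _, _, _ => rfl
  | [], _ :: _, hlen, _, _, _ => by simp at hlen
  | _ :: _, [], hlen, _, _, _ => by simp at hlen
  | b :: Bs, c :: Cs, hlen, hB, hC, hfl => by
      obtain ⟨a, t, rfl, hPa, ht⟩ := hB b (List.mem_cons_self)
      obtain ⟨a', t', rfl, hPa', ht'⟩ := hC c (List.mem_cons_self)
      rw [List.flatten_cons, List.flatten_cons, List.cons_append, List.cons_append] at hfl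
      injection hfl with h1 h2
      obtain ⟨e1, e2⟩ := splitP_unique t t' _ _ ht ht'
        (flatten_head_P Bs (fun b hb => hB b (.tail _ hb)))
        (flatten_head_P Cs (fun b hb => hC b (.tail _ hb))) h2
      subst h1; subst e1
      rw [blocks_unique Bs Cs (by simpa using hlen) (fun b hb => hB b (.tail _ hb))
        (fun b hb => hC b (.tail _ hb)) e2]

lemma flatten_segments (S : List α) :
    ∀ (q : ℕ) (n : ℕ → ℕ), Monotone n →
      (List.ofFn fun i : Fin q => (S.drop (n i)).take (n (i + 1) - n i)).flatten
        = (S.drop (n 0)).take (n q - n 0) := by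
  intro q
  induction q with
  | zero => intro n _; simp
  | succ q ih =>
    intro n hn
    rw [List.ofFn_succ, List.flatten_cons]
    have key := ih (fun k => n (k + 1)) (fun a b hab => hn (by omega))
    have heq : (List.ofFn fun i : Fin q =>
        (S.drop (n (i.succ : Fin (q+1)).1)).take (n ((i.succ : Fin (q+1)).1 + 1)
          - n (i.succ : Fin (q+1)).1))
        = List.ofFn fun i : Fin q => (S.drop (n (i.1 + 1))).take (n (i.1 + 1 + 1) - n (i.1 + 1)) := by
      congr 1
    rw [heq, key]
    have h01 : n 0 ≤ n 1 := hn (by omega)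
    have h1q : n 1 ≤ n (q + 1) := hn (by omega)
    have hd : S.drop (n 1) = (S.drop (n 0)).drop (n 1 - n 0) := by
      rw [List.drop_drop]; congr 1; omega
    beta_reduce
    simp only [Fin.val_zero, Nat.zero_add]
    rw [hd, ← List.take_add]
    congr 1; omega

/-- Structure of a simple path with distinct endpoints: its `dropLast` is its head
followed by interior vertices. -/
lemma simplePath_dropLast {V : Type*} (Adj : V → V → Prop) {a b : V} {l : List V}
    (h : IsSimplePath Adj a b l) (hab : a ≠ b) :
    ∃ t, l.dropLast = a :: t ∧ ∀ v ∈ t, v ∈ l ∧ v ≠ a ∧ v ≠ b := by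
  obtain ⟨-, hhead, hlast, hnodup⟩ := h
  cases l with
  | nil => simp at hhead
  | cons a' m =>
    simp only [List.head?_cons, Option.some.injEq] at hhead
    subst a'
    cases m with
    | nil =>
      simp only [List.getLast?_singleton, Option.some.injEq] at hlast
      exact absurd hlast hab
    | cons x m' =>
      refine ⟨(x :: m').dropLast, by rw [List.dropLast_cons₂], fun v hv => ?_⟩
      have hvm : v ∈ x :: m' := List.dropLast_subset _ hv
      have hbl : (a :: x :: m').dropLast ++ [b] = a :: x :: m' :=
        List.dropLast_append_getLast? b hlast
      have hbnotin : b ∉ (a :: x :: m').dropLast := by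
        intro hmem
        have := hnodup
        rw [← hbl] at this
        exact (List.disjoint_of_nodup_append this) hmem (by simp)
      constructor
      · exact List.mem_cons_of_mem _ hvm
      constructor
      · rintro rfl
        exact (List.nodup_cons.1 hnodup).1 hvm
      · rintro rfl
        exact hbnotin (by rw [List.dropLast_cons₂]; exact List.mem_cons_of_mem _ hv)

end Helpers

/-- Every `ιo`-simple path decomposes uniquely as a concatenation of simple-path
segments joining consecutive super-simple nodes `ρ_i → ρ_{i+1}`, all of whose
interior nodes are non-super-simple simple nodes lying between `ρ_i` and
`ρ_{i+1}`. -/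
theorem stmt13 {V : Type*} [Fintype V] [DecidableEq V] (Adj : V → V → Prop)
    (ι o : V) (hio : ι ≠ o)
    (hcore : ∀ v : V, Relation.ReflTransGen Adj ι v ∧ Relation.ReflTransGen Adj v o)
    (q : ℕ) (hq : 1 ≤ q) (ρ : Fin (q+1) → V) (hinj : Function.Injective ρ)
    (h0 : ρ 0 = ι) (hlast : ρ (Fin.last q) = o)
    (hss : ∀ v : V, (∀ l : List V, IsSimplePath Adj ι o l → v ∈ l) ↔ v ∈ Set.range ρ)
    (horder : ∀ l : List V, IsSimplePath Adj ι o l →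
      ∀ i j : Fin (q+1), i < j → l.idxOf (ρ i) < l.idxOf (ρ j))
    (S : List V) (hS : IsSimplePath Adj ι o S) :
    ∃! segs : Fin q → List V,
      (∀ i : Fin q, IsSimplePath Adj (ρ i.castSucc) (ρ i.succ) (segs i)) ∧
      (∀ i : Fin q, ∀ v ∈ segs i, v ≠ ρ i.castSucc → v ≠ ρ i.succ →
        ((∃ l : List V, IsSimplePath Adj ι o l ∧ v ∈ l) ∧
         ¬ (∀ l : List V, IsSimplePath Adj ι o l → v ∈ l) ∧
         (∃ l : List V, IsSimplePath Adj ι o l ∧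
           l.idxOf (ρ i.castSucc) < l.idxOf v ∧
           l.idxOf v < l.idxOf (ρ i.succ)))) ∧
      S = (List.ofFn (fun i : Fin q => (segs i).dropLast)).flatten ++ [o] := by
  obtain ⟨hchain, hhead, hlastS, hnodup⟩ := hS
  have hS' : IsSimplePath Adj ι o S := ⟨hchain, hhead, hlastS, hnodup⟩
  have hSlen : 0 < S.length := by
    cases S with
    | nil => simp at hhead
    | cons a T => simp
  have hmem : ∀ i, ρ i ∈ S := fun i => (hss (ρ i)).2 ⟨i, rfl⟩ S hS'
  set idx : Fin (q+1) → ℕ := fun i => S.idxOf (ρ i) with hidxdef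
  have hidxlt : ∀ i, idx i < S.length := fun i => List.idxOf_lt_length_iff.2 (hmem i)
  have hget : ∀ i, S[idx i]'(hidxlt i) = ρ i := fun i => List.getElem_idxOf (hidxlt i)
  have hmono : ∀ i j : Fin (q+1), i < j → idx i < idx j := fun i j h => horder S hS' i j h
  have hmono' : ∀ i j : Fin (q+1), i ≤ j → idx i ≤ idx j := by
    intro i j h
    rcases eq_or_lt_of_le h with rfl | h
    · exact le_refl _
    · exact le_of_lt (hmono i j h)
  have hidx0 : idx 0 = 0 := by
    have h00 : S[0]'hSlen = ι := by
      have := List.head?_eq_getElem? (l := S)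
      rw [hhead, List.getElem?_eq_getElem hSlen] at this
      exact (Option.some_injective _ this.symm)
    have he : idx 0 = S.idxOf (S[0]'hSlen) := by
      rw [h00]
      show S.idxOf (ρ 0) = S.idxOf ι
      rw [h0]
    rw [he, List.Nodup.idxOf_getElem hnodup]
  have hidxlast : idx (Fin.last q) = S.length - 1 := by
    have hl : S.length - 1 < S.length := by omega
    have h00 : S[S.length - 1]'hl = o := by
      have := List.getLast?_eq_getElem? (l := S)
      rw [hlastS, List.getElem?_eq_getElem hl] at this
      exact (Option.some_injective _ this.symm)
    have he : idx (Fin.last q) = S.idxOf (S[S.length - 1]'hl) := by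
      rw [h00]
      show S.idxOf (ρ (Fin.last q)) = S.idxOf o
      rw [hlast]
    rw [he, List.Nodup.idxOf_getElem hnodup]
  clear_value idx
  -- basic data for each segment
  have hcs : ∀ i : Fin q, (i.castSucc : Fin (q+1)) < i.succ := fun i => by
    rw [Fin.lt_def]; simp
  have hab : ∀ i : Fin q, idx i.castSucc < idx i.succ := fun i => hmono _ _ (hcs i)
  set segs : Fin q → List V :=
    fun i => (S.drop (idx i.castSucc)).take (idx i.succ - idx i.castSucc + 1) with hsegsdef
  have hlen : ∀ i : Fin q, (segs i).length = idx i.succ - idx i.castSucc + 1 := by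
    intro i
    have := hidxlt i.succ
    have := hab i
    simp only [hsegsdef, List.length_take, List.length_drop]
    omega
  have hget? : ∀ (i : Fin q) (k : ℕ), k < idx i.succ - idx i.castSucc + 1 →
      (segs i)[k]? = S[idx i.castSucc + k]? := by
    intro i k hk
    simp only [hsegsdef]
    rw [List.getElem?_take_of_lt hk, List.getElem?_drop]
  -- membership in a segment pins the index
  have hmemseg : ∀ (i : Fin q) (v : V), v ∈ segs i →
      idx i.castSucc ≤ S.idxOf v ∧ S.idxOf v ≤ idx i.succ ∧ v ∈ S := by
    intro i v hv
    obtain ⟨k, hk, hvk⟩ := List.getElem_of_mem hv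
    have hk' : k < idx i.succ - idx i.castSucc + 1 := by
      have := hlen i; omega
    have hsome : S[idx i.castSucc + k]? = some v := by
      rw [← hget? i k hk', List.getElem?_eq_getElem hk, hvk]
    obtain ⟨hlt, he⟩ := List.getElem?_eq_some_iff.1 hsome
    have hidxv : S.idxOf v = idx i.castSucc + k := by
      rw [← he, List.Nodup.idxOf_getElem hnodup]
    have habi := hab i
    refine ⟨by omega, by omega, ?_⟩
    rw [← he]; exact List.getElem_mem _
  have hsub : ∀ i : Fin q, List.Sublist (segs i) S := by
    intro i
    rw [hsegsdef]
    exact (List.take_sublist _ _).trans (List.drop_sublist _ _)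
  -- each segment is a simple path
  have hsp : ∀ i : Fin q, IsSimplePath Adj (ρ i.castSucc) (ρ i.succ) (segs i) := by
    intro i
    have hlseg := hlen i
    have habi := hab i
    refine ⟨(hchain.drop _).take _, ?_, ?_, hnodup.sublist (hsub i)⟩
    · rw [List.head?_eq_getElem?, hget? i 0 (by omega), Nat.add_zero,
        List.getElem?_eq_getElem (hidxlt i.castSucc), hget]
    · rw [List.getLast?_eq_getElem?, hlseg, Nat.add_sub_cancel,
        hget? i (idx i.succ - idx i.castSucc) (by omega)]
      have he : idx i.castSucc + (idx i.succ - idx i.castSucc) = idx i.succ := by omega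
      rw [he, List.getElem?_eq_getElem (hidxlt i.succ), hget]
  -- interior characterization
  have hint : ∀ i : Fin q, ∀ v ∈ segs i, v ≠ ρ i.castSucc → v ≠ ρ i.succ →
      idx i.castSucc < S.idxOf v ∧ S.idxOf v < idx i.succ := by
    intro i v hv hva hvb
    obtain ⟨h1, h2, hvS⟩ := hmemseg i v hv
    have hvlt : S.idxOf v < S.length := List.idxOf_lt_length_iff.2 hvS
    have hvsome : S[S.idxOf v]? = some v := by
      rw [List.getElem?_eq_getElem hvlt, List.getElem_idxOf hvlt]
    have hne1 : S.idxOf v ≠ idx i.castSucc := by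
      intro h
      apply hva
      rw [h, List.getElem?_eq_getElem (hidxlt i.castSucc), hget] at hvsome
      exact (Option.some_injective _ hvsome).symm
    have hne2 : S.idxOf v ≠ idx i.succ := by
      intro h
      apply hvb
      rw [h, List.getElem?_eq_getElem (hidxlt i.succ), hget] at hvsome
      exact (Option.some_injective _ hvsome).symm
    exact ⟨by omega, by omega⟩
  have hnotrange : ∀ i : Fin q, ∀ v ∈ segs i, v ≠ ρ i.castSucc → v ≠ ρ i.succ →
      v ∉ Set.range ρ := by
    intro i v hv hva hvb
    rintro ⟨j, rfl⟩
    obtain ⟨hl1, hl2⟩ := hint i _ hv hva hvb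
    rw [show S.idxOf (ρ j) = idx j by rw [hidxdef]] at hl1 hl2
    rcases lt_trichotomy j i.castSucc with h | h | h
    · exact absurd (hmono' j i.castSucc (le_of_lt h)) (by omega)
    · exact hva (congrArg ρ h)
    · rcases lt_trichotomy j i.succ with h' | h' | h'
      · have : (i.castSucc : Fin (q+1)).1 < j.1 := h
        have : j.1 < (i.succ : Fin (q+1)).1 := h'
        simp only [Fin.coe_castSucc, Fin.val_succ] at *
        omega
      · exact hvb (congrArg ρ h')
      · exact absurd (hmono' i.succ j (le_of_lt h')) (by omega)
  -- the flatten property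
  have hflat : ∀ f : Fin q → List V,
      (∀ i : Fin q, IsSimplePath Adj (ρ i.castSucc) (ρ i.succ) (f i)) →
      True := fun _ _ => trivial
  set n : ℕ → ℕ := fun k => idx ⟨min k q, by omega⟩ with hndef
  have hnmono : Monotone n := by
    intro a b h
    apply hmono'
    rw [Fin.le_def]
    simp only
    omega
  have hdropLast_seg : ∀ i : Fin q,
      (segs i).dropLast = (S.drop (idx i.castSucc)).take (idx i.succ - idx i.castSucc) := by
    intro i
    have hlb : idx i.succ - idx i.castSucc + 1 ≤ (S.drop (idx i.castSucc)).length := by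
      simp only [List.length_drop]
      have := hidxlt i.succ
      have := hab i
      omega
    simp only [hsegsdef]
    rw [List.dropLast_eq_take, List.length_take, List.take_take]
    congr 1
    simp only [List.length_drop] at hlb ⊢
    omega
  have hflatten : (List.ofFn fun i : Fin q => (segs i).dropLast).flatten = S.dropLast := by
    have heq : (List.ofFn fun i : Fin q => (segs i).dropLast)
        = List.ofFn fun i : Fin q => (S.drop (n i.1)).take (n (i.1 + 1) - n i.1) := by
      congr 1
      funext i
      rw [hdropLast_seg i]
      have h1 : n i.1 = idx i.castSucc := by
        simp only [hndef]
        congr 1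
        rw [Fin.ext_iff]
        simp only [Fin.coe_castSucc]
        omega
      have h2 : n (i.1 + 1) = idx i.succ := by
        simp only [hndef]
        congr 1
        rw [Fin.ext_iff]
        simp only [Fin.val_succ]
        omega
      rw [h1, h2]
    rw [heq, flatten_segments S q n hnmono]
    have h1 : n 0 = 0 := by
      simp only [hndef]
      have : (⟨min 0 q, by omega⟩ : Fin (q+1)) = 0 := by rw [Fin.ext_iff]; simp
      rw [this, hidx0]
    have h2 : n q = S.length - 1 := by
      simp only [hndef]
      have : (⟨min q q, by omega⟩ : Fin (q+1)) = Fin.last q := by rw [Fin.ext_iff]; simp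
      rw [this, hidxlast]
    rw [h1, h2, List.drop_zero, Nat.sub_zero, ← List.dropLast_eq_take]
  have hSdecomp : S = (List.ofFn fun i : Fin q => (segs i).dropLast).flatten ++ [o] := by
    rw [hflatten]
    exact (List.dropLast_append_getLast? o hlastS).symm
  -- existence part conditions
  have hcond2 : ∀ i : Fin q, ∀ v ∈ segs i, v ≠ ρ i.castSucc → v ≠ ρ i.succ →
      ((∃ l : List V, IsSimplePath Adj ι o l ∧ v ∈ l) ∧
       ¬ (∀ l : List V, IsSimplePath Adj ι o l → v ∈ l) ∧
       (∃ l : List V, IsSimplePath Adj ι o l ∧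
         l.idxOf (ρ i.castSucc) < l.idxOf v ∧ l.idxOf v < l.idxOf (ρ i.succ))) := by
    intro i v hv hva hvb
    have hci : S.idxOf (ρ i.castSucc) = idx i.castSucc := by rw [hidxdef]
    have hsi : S.idxOf (ρ i.succ) = idx i.succ := by rw [hidxdef]
    refine ⟨⟨S, hS', (hmemseg i v hv).2.2⟩, ?_, ⟨S, hS', ?_⟩⟩
    · intro h
      exact hnotrange i v hv hva hvb ((hss v).1 h)
    · rw [hci, hsi]
      exact hint i v hv hva hvb
  -- uniqueness
  have hepne : ∀ i : Fin q, ρ i.castSucc ≠ ρ i.succ := by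
    intro i h
    exact absurd (hinj h) (Fin.ne_of_lt (hcs i))
  have huniq : ∀ f g : Fin q → List V,
      ((∀ i : Fin q, IsSimplePath Adj (ρ i.castSucc) (ρ i.succ) (f i)) ∧
       (∀ i : Fin q, ∀ v ∈ f i, v ≠ ρ i.castSucc → v ≠ ρ i.succ →
         ((∃ l : List V, IsSimplePath Adj ι o l ∧ v ∈ l) ∧
          ¬ (∀ l : List V, IsSimplePath Adj ι o l → v ∈ l) ∧
          (∃ l : List V, IsSimplePath Adj ι o l ∧
            l.idxOf (ρ i.castSucc) < l.idxOf v ∧ l.idxOf v < l.idxOf (ρ i.succ)))) ∧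
       S = (List.ofFn (fun i : Fin q => (f i).dropLast)).flatten ++ [o]) →
      ((∀ i : Fin q, IsSimplePath Adj (ρ i.castSucc) (ρ i.succ) (g i)) ∧
       (∀ i : Fin q, ∀ v ∈ g i, v ≠ ρ i.castSucc → v ≠ ρ i.succ →
         ((∃ l : List V, IsSimplePath Adj ι o l ∧ v ∈ l) ∧
          ¬ (∀ l : List V, IsSimplePath Adj ι o l → v ∈ l) ∧
          (∃ l : List V, IsSimplePath Adj ι o l ∧
            l.idxOf (ρ i.castSucc) < l.idxOf v ∧ l.idxOf v < l.idxOf (ρ i.succ)))) ∧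
       S = (List.ofFn (fun i : Fin q => (g i).dropLast)).flatten ++ [o]) →
      f = g := by
    intro f g ⟨hf1, hf2, hf3⟩ ⟨hg1, hg2, hg3⟩
    have hblocks : ∀ (h : Fin q → List V),
        (∀ i : Fin q, IsSimplePath Adj (ρ i.castSucc) (ρ i.succ) (h i)) →
        (∀ i : Fin q, ∀ v ∈ h i, v ≠ ρ i.castSucc → v ≠ ρ i.succ →
          ¬ (∀ l : List V, IsSimplePath Adj ι o l → v ∈ l)) →
        ∀ b ∈ List.ofFn (fun i : Fin q => (h i).dropLast),
          ∃ a t, b = a :: t ∧ a ∈ Set.range ρ ∧ ∀ v ∈ t, v ∉ Set.range ρ := by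
      intro h h1 h2 b hb
      rw [List.mem_ofFn] at hb
      obtain ⟨i, rfl⟩ := hb
      obtain ⟨t, ht, htmem⟩ := simplePath_dropLast Adj (h1 i) (hepne i)
      refine ⟨ρ i.castSucc, t, ht, ⟨i.castSucc, rfl⟩, fun v hv hvr => ?_⟩
      obtain ⟨hvmem, hva, hvb⟩ := htmem v hv
      exact h2 i v hvmem hva hvb ((hss v).2 hvr)
    have hfg : (List.ofFn fun i : Fin q => (f i).dropLast)
        = List.ofFn fun i : Fin q => (g i).dropLast := by
      apply blocks_unique (P := fun v => v ∈ Set.range ρ)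
      · simp
      · exact hblocks f hf1 (fun i v hv hva hvb => (hf2 i v hv hva hvb).2.1)
      · exact hblocks g hg1 (fun i v hv hva hvb => (hg2 i v hv hva hvb).2.1)
      · have h3 := hf3.symm.trans hg3
        have := congrArg List.dropLast h3
        simpa [List.dropLast_concat] using this
    have hfg' : ∀ i : Fin q, (f i).dropLast = (g i).dropLast := by
      intro i
      exact congrFun (List.ofFn_injective hfg) i
    funext i
    have hfe : (f i).dropLast ++ [ρ i.succ] = f i :=
      List.dropLast_append_getLast? _ (hf1 i).2.2.1
    have hge : (g i).dropLast ++ [ρ i.succ] = g i :=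
      List.dropLast_append_getLast? _ (hg1 i).2.2.1
    rw [← hfe, ← hge, hfg' i]
  exact ⟨segs, ⟨hsp, hcond2, hSdecomp⟩, fun f hf => huniq f segs hf ⟨hsp, hcond2, hSdecomp⟩⟩
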